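/- Let S be a symmetric positive definite p×p real matrix, let λ > 0, and let P be a partition of {1,…,p} such that |S_ij| ≤ λ for every cross-block pair (i,j). Then every symmetric positive definite matrix Θ̂ that maximizes the Glasso objective logdet Θ − tr(ΘS) − λ Σ_{i≠j}|Θ_ij| over symmetric positive definite matrices satisfies Θ̂_ij = 0 for every cross-block pair (i,j); that is, the Glasso solution is block diagonal with respect to P. -/

import Mathlib

section Helpers

open Matrix Finset

variable {n : ℕ}

/-- Conjugation of a PD matrix by an invertible matrix is PD (real case). -/
lemma posDef_conj_transpose_aux {X B : Matrix (Fin n) (Fin n) ℝ} (hX : X.PosDef)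
    (hB : IsUnit B.det) : (B * X * Bᵀ).PosDef := by
  rw [Matrix.posDef_iff_dotProduct_mulVec]
  constructor
  · have h1 : (B * X * Bᵀ)ᵀ = B * Xᵀ * Bᵀ := by
      simp [Matrix.transpose_mul, Matrix.mul_assoc]
    have hXs : Xᵀ = X := hX.1
    rw [Matrix.IsHermitian, conjTranspose_eq_transpose_of_trivial, h1, hXs]
  · intro x hx
    have hBt : IsUnit Bᵀ.det := by rwa [Matrix.det_transpose]
    have hvec : Bᵀ *ᵥ x ≠ 0 := by
      intro h
      apply hx
      have hinj := Matrix.mulVec_injective_iff_isUnit.mpr ((Matrix.isUnit_iff_isUnit_det _).mpr hBt)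
      have : Bᵀ *ᵥ x = Bᵀ *ᵥ 0 := by simpa using h
      exact hinj this
    have := hX.dotProduct_mulVec_pos hvec
    simp only [star_trivial] at this ⊢
    calc x ⬝ᵥ (B * X * Bᵀ) *ᵥ x = (Bᵀ *ᵥ x) ⬝ᵥ X *ᵥ (Bᵀ *ᵥ x) := by
          rw [← Matrix.mulVec_mulVec, ← Matrix.mulVec_mulVec,
            Matrix.dotProduct_mulVec x B, ← Matrix.transpose_transpose B, Matrix.vecMul_transpose, Matrix.transpose_transpose]
      _ > 0 := this

/-- For a real positive definite matrix `M ≠ 1`, `log det M < trace M - n`. -/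
lemma logdet_lt_trace_sub {M : Matrix (Fin n) (Fin n) ℝ} (hM : M.PosDef) (hne : M ≠ 1) :
    Real.log M.det < M.trace - n := by
  have hH : M.IsHermitian := hM.1
  set μ : Fin n → ℝ := hH.eigenvalues with hμ
  have hμpos : ∀ i, 0 < μ i := fun i => hM.eigenvalues_pos i
  have hdet : M.det = ∏ i, μ i := by
    have := hH.det_eq_prod_eigenvalues
    simpa using this
  have hUstar : (star (hH.eigenvectorUnitary : Matrix (Fin n) (Fin n) ℝ)) *
      (hH.eigenvectorUnitary : Matrix (Fin n) (Fin n) ℝ) = 1 := by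
    exact Matrix.mem_unitaryGroup_iff'.mp (hH.eigenvectorUnitary).2
  have htr : M.trace = ∑ i, μ i := by
    conv_lhs => rw [hH.spectral_theorem, Unitary.conjStarAlgAut_apply]
    rw [Matrix.trace_mul_cycle, hUstar, one_mul, Matrix.trace_diagonal]
    simp [hμ]
  -- some eigenvalue differs from 1
  have hex : ∃ i, μ i ≠ 1 := by
    by_contra h
    push_neg at h
    apply hne
    have hdiag : Matrix.diagonal (RCLike.ofReal ∘ μ : Fin n → ℝ) = 1 := by
      have h2 : (RCLike.ofReal ∘ μ : Fin n → ℝ) = fun _ => 1 := funext fun i => by simp [h i]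
      rw [h2]
      exact Matrix.diagonal_one
    have := hH.spectral_theorem
    rw [hdiag] at this
    rw [this, Unitary.conjStarAlgAut_apply, mul_one]
    exact Matrix.mem_unitaryGroup_iff.mp (hH.eigenvectorUnitary).2
  obtain ⟨i₀, hi₀⟩ := hex
  have hlt : ∑ i, Real.log (μ i) < ∑ i, (μ i - 1) := by
    apply Finset.sum_lt_sum
    · intro i _
      exact Real.log_le_sub_one_of_pos (hμpos i)
    · exact ⟨i₀, Finset.mem_univ i₀, Real.log_lt_sub_one_of_pos (hμpos i₀) hi₀⟩
  have hlog : Real.log M.det = ∑ i, Real.log (μ i) := by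
    rw [hdet]
    exact Real.log_prod fun i _ => (hμpos i).ne'
  rw [hlog, htr]
  calc ∑ i, Real.log (μ i) < ∑ i, (μ i - 1) := hlt
    _ = ∑ i, μ i - n := by rw [Finset.sum_sub_distrib]; simp [mul_comm]

open scoped MatrixOrder in
/-- Strict concavity consequence: for PD `X ≠ Y`, `log det X < log det Y + tr(Y⁻¹X) - n`. -/
lemma logdet_lt_key {X Y : Matrix (Fin n) (Fin n) ℝ} (hX : X.PosDef) (hY : Y.PosDef)
    (hne : X ≠ Y) :
    Real.log X.det < Real.log Y.det + (Y⁻¹ * X).trace - n := by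
  set C := CFC.sqrt Y with hCdef
  have hC : C.PosSemidef := (CFC.sqrt_nonneg Y).posSemidef
  have hCC : C * C = Y := CFC.sqrt_mul_sqrt_self Y hY.posSemidef.nonneg
  have hdetY : 0 < Y.det := hY.det_pos
  have hdetCC : C.det * C.det = Y.det := by rw [← Matrix.det_mul, hCC]
  have hdetC : C.det ≠ 0 := by
    intro h; rw [h, zero_mul] at hdetCC; exact hdetY.ne' hdetCC.symm
  have hCu : IsUnit C.det := hdetC.isUnit
  have hCsymm : Cᵀ = C := by
    have h1 := hC.1
    rw [← Matrix.conjTranspose_eq_transpose_of_trivial]; exact h1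
  have hCinvT : (C⁻¹)ᵀ = C⁻¹ := by rw [Matrix.transpose_nonsing_inv, hCsymm]
  have hCiu : IsUnit (C⁻¹).det := C.isUnit_nonsing_inv_det hCu
  set M := C⁻¹ * X * C⁻¹ with hMdef
  have hMpd : M.PosDef := by
    have := posDef_conj_transpose_aux hX hCiu
    rwa [hCinvT] at this
  have hdetCi : (C⁻¹).det = (C.det)⁻¹ := by
    rw [Matrix.det_nonsing_inv, Ring.inverse_eq_inv']
  have hMdet : M.det = X.det / Y.det := by
    rw [hMdef, Matrix.det_mul, Matrix.det_mul, hdetCi, ← hdetCC]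
    field_simp
  have hMtr : M.trace = (Y⁻¹ * X).trace := by
    rw [hMdef, Matrix.trace_mul_cycle, ← Matrix.mul_inv_rev, hCC]
  have hMne : M ≠ 1 := by
    intro h
    apply hne
    have : C * M * C = C * 1 * C := by rw [h]
    rw [hMdef, ← Matrix.mul_assoc, ← Matrix.mul_assoc, Matrix.mul_nonsing_inv _ hCu,
      Matrix.one_mul, Matrix.mul_assoc, Matrix.nonsing_inv_mul _ hCu, Matrix.mul_one,
      Matrix.mul_one] at this
    rw [this, hCC]
  have := logdet_lt_trace_sub hMpd hMne
  rw [hMdet, hMtr, Real.log_div hX.det_pos.ne' hdetY.ne'] at this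
  linarith

section BlockDiag

variable {ι : Type*} [DecidableEq ι] {blk : Fin n → ι}

/-- The inverse of a block-diagonal matrix is block diagonal. -/
lemma inv_blockDiag {M : Matrix (Fin n) (Fin n) ℝ}
    (hM : ∀ i j, blk i ≠ blk j → M i j = 0) (hMu : IsUnit M.det) :
    ∀ i j, blk i ≠ blk j → M⁻¹ i j = 0 := by
  set N : Matrix (Fin n) (Fin n) ℝ :=
    Matrix.of fun i j => if blk i = blk j then M⁻¹ i j else 0 with hN
  have hMN : M * N = 1 := by
    have hMM : M * M⁻¹ = 1 := Matrix.mul_nonsing_inv _ hMu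
    ext i j
    by_cases hb : blk i = blk j
    · have : (M * N) i j = (M * M⁻¹) i j := by
        rw [Matrix.mul_apply, Matrix.mul_apply]
        apply Finset.sum_congr rfl
        intro k _
        by_cases hk : blk k = blk j
        · simp [hN, hk]
        · have : M i k = 0 := hM i k (by rw [hb]; exact fun h => hk h.symm)
          simp [hN, hk, this]
      rw [this, hMM]
    · have hij : i ≠ j := fun h => hb (by rw [h])
      have : (M * N) i j = 0 := by
        rw [Matrix.mul_apply]
        apply Finset.sum_eq_zero
        intro k _
        by_cases hk : blk k = blk j
        · have : M i k = 0 := hM i k (by rw [hk]; exact hb)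
          simp [this]
        · simp [hN, hk]
      rw [this, Matrix.one_apply_ne hij]
  have hNinv : M⁻¹ = N := Matrix.inv_eq_right_inv hMN
  intro i j hb
  rw [hNinv]
  simp [hN, hb]

/-- The block-diagonal part of a PD matrix is PD. -/
lemma posDef_blockDiag {A : Matrix (Fin n) (Fin n) ℝ} (hA : A.PosDef) :
    (Matrix.of fun i j => if blk i = blk j then A i j else (0:ℝ)).PosDef := by
  set D : Matrix (Fin n) (Fin n) ℝ :=
    Matrix.of fun i j => if blk i = blk j then A i j else 0 with hD
  have hAH : ∀ i j, A j i = A i j := by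
    intro i j
    have := hA.1
    calc A j i = Aᴴ i j := by simp [Matrix.conjTranspose_apply]
      _ = A i j := by rw [this]
  rw [Matrix.posDef_iff_dotProduct_mulVec]
  constructor
  · ext i j
    simp only [Matrix.conjTranspose_apply, hD, Matrix.of_apply, star_trivial]
    by_cases hb : blk i = blk j
    · rw [if_pos hb.symm, if_pos hb, hAH]
    · rw [if_neg (fun h => hb h.symm), if_neg hb]
  · intro x hx
    set t : Finset ι := Finset.image blk Finset.univ with ht
    set xc : ι → Fin n → ℝ := fun c i => if blk i = c then x i else 0 with hxc
    have key : ∀ i j, x i * D i j * x j = ∑ c ∈ t, xc c i * A i j * xc c j := by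
      intro i j
      rw [Finset.sum_eq_single (blk i)]
      · simp only [hD, hxc, Matrix.of_apply]
        by_cases hb : blk i = blk j
        · rw [if_pos hb, if_pos trivial, if_pos hb.symm]
        · rw [if_neg hb, if_pos trivial, if_neg (fun h : blk j = blk i => hb h.symm)]
          ring
      · intro c _ hc
        simp only [hxc]
        rw [if_neg (fun h : blk i = c => hc h.symm)]
        ring
      · intro hbi
        exact absurd (Finset.mem_image_of_mem blk (Finset.mem_univ i)) hbi
    have hquad : x ⬝ᵥ D *ᵥ x = ∑ c ∈ t, (xc c) ⬝ᵥ A *ᵥ (xc c) := by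
      simp only [dotProduct, Matrix.mulVec, dotProduct, Finset.mul_sum]
      calc ∑ i, ∑ j, x i * (D i j * x j)
          = ∑ i, ∑ j, ∑ c ∈ t, xc c i * A i j * xc c j := by
            apply Finset.sum_congr rfl; intro i _
            apply Finset.sum_congr rfl; intro j _
            rw [← mul_assoc]; exact key i j
        _ = ∑ i, ∑ c ∈ t, ∑ j, xc c i * A i j * xc c j := by
            apply Finset.sum_congr rfl; intro i _; exact Finset.sum_comm
        _ = ∑ c ∈ t, ∑ i, ∑ j, xc c i * A i j * xc c j := by
            exact Finset.sum_comm
        _ = ∑ c ∈ t, ∑ i, ∑ j, xc c i * (A i j * xc c j) := by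
            simp [mul_assoc]
    obtain ⟨i₀, hi₀⟩ : ∃ i, x i ≠ 0 := Function.ne_iff.mp hx
    have hxc0 : xc (blk i₀) ≠ 0 := by
      intro h
      apply hi₀
      have := congrFun h i₀
      simpa [hxc] using this
    simp only [star_trivial]
    rw [hquad]
    apply Finset.sum_pos'
    · intro c _
      have := hA.posSemidef.dotProduct_mulVec_nonneg (xc c)
      simpa using this
    · refine ⟨blk i₀, Finset.mem_image_of_mem blk (Finset.mem_univ i₀), ?_⟩
      have := hA.dotProduct_mulVec_pos hxc0
      simpa using this

end BlockDiag

end Helpers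


/-- The Glasso objective `logdet Θ − tr(Θ S) − λ Σ_{i≠j} |Θ_ij|`. -/
noncomputable def glassoObj {p : ℕ} (S : Matrix (Fin p) (Fin p) ℝ) (lam : ℝ)
    (Θ : Matrix (Fin p) (Fin p) ℝ) : ℝ :=
  Real.log Θ.det - (Θ * S).trace - lam * ∑ i, ∑ j, if i ≠ j then |Θ i j| else 0

/-- let `S` be symmetric positive definite, `λ > 0`, and let a partition of
`{1,…,p}` be given by the fibers of a block-labelling function `blk`. If `|S_ij| ≤ λ`
for every cross-block pair `(i,j)` (i.e. whenever `blk i ≠ blk j`), then every symmetric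
positive definite maximizer `Θ̂` of the Glasso objective over symmetric positive definite
matrices satisfies `Θ̂_ij = 0` for every cross-block pair: the Glasso solution is block
diagonal with respect to the partition. -/
theorem glasso_block_diagonal {p : ℕ} {ι : Type*}
    (S : Matrix (Fin p) (Fin p) ℝ) (hSsymm : S.IsSymm) (hSpd : S.PosDef)
    (lam : ℝ) (hlam : 0 < lam) (blk : Fin p → ι)
    (hS : ∀ i j : Fin p, blk i ≠ blk j → |S i j| ≤ lam)
    (Θhat : Matrix (Fin p) (Fin p) ℝ) (hΘsymm : Θhat.IsSymm) (hΘpd : Θhat.PosDef)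
    (hmax : ∀ Θ : Matrix (Fin p) (Fin p) ℝ, Θ.IsSymm → Θ.PosDef →
      glassoObj S lam Θ ≤ glassoObj S lam Θhat) :
    ∀ i j : Fin p, blk i ≠ blk j → Θhat i j = 0 := by
  classical
  intro i j hij
  by_contra hA0
  set D : Matrix (Fin p) (Fin p) ℝ :=
    Matrix.of fun a b => if blk a = blk b then Θhat a b else 0 with hD
  have hDpd : D.PosDef := posDef_blockDiag hΘpd
  have hDsymm : D.IsSymm := by
    have h1 : D.conjTranspose = D := hDpd.1
    rwa [Matrix.conjTranspose_eq_transpose_of_trivial] at h1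
  have hne : Θhat ≠ D := by
    intro h
    apply hA0
    rw [show Θhat i j = D i j from by rw [← h]]
    simp [hD, hij]
  have hDu : IsUnit D.det := hDpd.det_pos.ne'.isUnit
  have hDinv0 : ∀ a b, blk a ≠ blk b → D⁻¹ a b = 0 :=
    inv_blockDiag (fun a b h => by simp [hD, h]) hDu
  have htrace : (D⁻¹ * Θhat).trace = (p : ℝ) := by
    have h1 : (D⁻¹ * Θhat).trace = (D⁻¹ * D).trace := by
      simp only [Matrix.trace, Matrix.diag, Matrix.mul_apply]
      apply Finset.sum_congr rfl; intro a _
      apply Finset.sum_congr rfl; intro b _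
      by_cases hb : blk b = blk a
      · congr 1
        simp [hD, hb]
      · rw [hDinv0 a b (fun h => hb h.symm)]
        ring
    rw [h1, Matrix.nonsing_inv_mul _ hDu, Matrix.trace_one]
    simp
  have hlog : Real.log Θhat.det < Real.log D.det := by
    have := logdet_lt_key hΘpd hDpd hne
    rw [htrace] at this
    linarith
  have htr2 : ∀ M : Matrix (Fin p) (Fin p) ℝ,
      (M * S).trace = ∑ a, ∑ b, M a b * S b a := by
    intro M; simp [Matrix.trace, Matrix.diag, Matrix.mul_apply]
  have hT : (Θhat * S).trace - (D * S).trace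
      = ∑ a, ∑ b, (if blk a = blk b then 0 else Θhat a b * S b a) := by
    rw [htr2, htr2, ← Finset.sum_sub_distrib]
    apply Finset.sum_congr rfl; intro a _
    rw [← Finset.sum_sub_distrib]
    apply Finset.sum_congr rfl; intro b _
    by_cases hb : blk a = blk b
    · simp [hD, hb]
    · simp [hD, hb]
  have hP : (∑ a, ∑ b, if a ≠ b then |Θhat a b| else 0)
      - (∑ a, ∑ b, if a ≠ b then |D a b| else 0)
      = ∑ a, ∑ b, (if blk a = blk b then 0 else |Θhat a b|) := by
    rw [← Finset.sum_sub_distrib]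
    apply Finset.sum_congr rfl; intro a _
    rw [← Finset.sum_sub_distrib]
    apply Finset.sum_congr rfl; intro b _
    by_cases hb : blk a = blk b
    · simp [hD, hb]
    · have hab : a ≠ b := fun h => hb (by rw [h])
      simp [hD, hb, hab]
  have hTP : 0 ≤ (∑ a, ∑ b, (if blk a = blk b then 0 else Θhat a b * S b a))
      + lam * ∑ a, ∑ b, (if blk a = blk b then 0 else |Θhat a b|) := by
    rw [Finset.mul_sum, ← Finset.sum_add_distrib]
    apply Finset.sum_nonneg; intro a _
    rw [Finset.mul_sum, ← Finset.sum_add_distrib]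
    apply Finset.sum_nonneg; intro b _
    by_cases hb : blk a = blk b
    · simp [hb]
    · simp only [if_neg hb]
      have h1 : |S b a| ≤ lam := hS b a (fun h => hb h.symm)
      have h2 : -(|Θhat a b| * |S b a|) ≤ Θhat a b * S b a := by
        rw [← abs_mul]; exact neg_abs_le _
      nlinarith [abs_nonneg (Θhat a b)]
  have hobj : glassoObj S lam Θhat < glassoObj S lam D := by
    unfold glassoObj
    have hP2 : lam * (∑ a, ∑ b, if a ≠ b then |Θhat a b| else 0)
        - lam * (∑ a, ∑ b, if a ≠ b then |D a b| else 0)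
        = lam * ∑ a, ∑ b, (if blk a = blk b then 0 else |Θhat a b|) := by
      rw [← mul_sub, hP]
    linarith
  exact absurd (hmax D hDsymm hDpd) (not_le.mpr hobj)
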